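/- On an almost symplectic manifold (M,ω), the bracket {f,h} = ω(X_f,X_h) on the algebra of Hamiltonian functions satisfies the Jacobi identity, hence makes the set of Hamiltonian functions into a Poisson algebra. -/
import Mathlib


/-!
Statement 5: On an almost symplectic manifold `(M,ω)`, the bracket
`{f,h} = ω(X_f,X_h)` on Hamiltonian functions satisfies the Jacobi identity.
Since `X_{{h,k}} = [X_h,X_k]`, the Jacobi identity
`{f,{h,k}} + {h,{k,f}} + {k,{f,h}} = 0` reads
`ω(X_f,[X_h,X_k]) + ω(X_h,[X_k,X_f]) + ω(X_k,[X_f,X_h]) = 0`,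
where `ω(X,Y) = i(Y)(i(X)ω)`.

We axiomatize the Cartan calculus, including the intrinsic formula for `dω` on three
vector fields; the key point is `dω(X_f,X_h,X_k) = 0` for Hamiltonian vector fields
(encoded by `i(X_f)dω = 0` etc.).
-/

theorem poisson_bracket_jacobi_identity
    {V Ω0 Ω1 Ω2 Ω3 : Type*}
    [AddCommGroup Ω0] [AddCommGroup Ω1] [AddCommGroup Ω2] [AddCommGroup Ω3]
    (bracket : V → V → V)
    (act : V → Ω0 → Ω0)
    (d0 : Ω0 → Ω1) (d1 : Ω1 → Ω2) (d2 : Ω2 → Ω3)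
    (i1 : V → Ω1 → Ω0) (i2 : V → Ω2 → Ω1) (i3 : V → Ω3 → Ω2)
    (ω : Ω2)
    -- notation: w X Y = ω(X,Y) = i(Y) i(X) ω
    -- skew-symmetry of ω
    (hSkew : ∀ X Y : V, i1 X (i2 Y ω) = - i1 Y (i2 X ω))
    -- interior products are additive
    (hi1Neg : ∀ (X : V) (α : Ω1), i1 X (-α) = - i1 X α)
    (hi3Zero : ∀ X : V, i3 X (0 : Ω3) = 0)
    -- (dg)(X) = X g
    (hdf : ∀ (X : V) (g : Ω0), i1 X (d0 g) = act X g)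
    -- [X,Y] g = X (Y g) - Y (X g)
    (hbr : ∀ (X Y : V) (g : Ω0), act (bracket X Y) g = act X (act Y g) - act Y (act X g))
    -- intrinsic formula for dω on vector fields:
    -- dω(X,Y,Z) = Xω(Y,Z) - Yω(X,Z) + Zω(X,Y) - ω([X,Y],Z) + ω([X,Z],Y) - ω([Y,Z],X)
    (hdω : ∀ X Y Z : V,
      i1 Z (i2 Y (i3 X (d2 ω))) =
        act X (i1 Z (i2 Y ω)) - act Y (i1 Z (i2 X ω)) + act Z (i1 Y (i2 X ω))
        - i1 Z (i2 (bracket X Y) ω) + i1 Y (i2 (bracket X Z) ω)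
        - i1 X (i2 (bracket Y Z) ω))
    (f h k : Ω0) (Xf Xh Xk : V)
    -- X_f, X_h, X_k are Hamiltonian vector fields of f, h, k
    (hXf1 : i2 Xf ω = - d0 f) (hXf2 : i3 Xf (d2 ω) = 0)
    (hXh1 : i2 Xh ω = - d0 h) (hXh2 : i3 Xh (d2 ω) = 0)
    (hXk1 : i2 Xk ω = - d0 k) (hXk2 : i3 Xk (d2 ω) = 0) :
    -- Jacobi identity: {f,{h,k}} + {h,{k,f}} + {k,{f,h}} = 0, with X_{{h,k}} = [X_h,X_k]
    i1 (bracket Xh Xk) (i2 Xf ω) + i1 (bracket Xk Xf) (i2 Xh ω)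
      + i1 (bracket Xf Xh) (i2 Xk ω) = 0 := by
  have key : ∀ (X Y Z : V) (x y z : Ω0), i2 X ω = -d0 x → i2 Y ω = -d0 y →
      i2 Z ω = -d0 z → i3 X (d2 ω) = 0 →
      i1 Z (i2 Y (0 : Ω2)) = act X (act Z y) - act Y (act Z x) + act Z (act Y x) := by
    intro X Y Z x y z hX hY hZ hX2
    have h0 := hdω X Y Z
    rw [hX2] at h0
    have e1 : i1 Z (i2 Y ω) = act Y z := by
      rw [hSkew Z Y, hZ, hi1Neg, hdf, neg_neg]
    have e2 : i1 Z (i2 X ω) = act X z := by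
      rw [hSkew Z X, hZ, hi1Neg, hdf, neg_neg]
    have e3 : i1 Y (i2 X ω) = act X y := by
      rw [hSkew Y X, hY, hi1Neg, hdf, neg_neg]
    have e4 : i1 Z (i2 (bracket X Y) ω) = act X (act Y z) - act Y (act X z) := by
      rw [hSkew Z (bracket X Y), hZ, hi1Neg, hdf, neg_neg, hbr]
    have e5 : i1 Y (i2 (bracket X Z) ω) = act X (act Z y) - act Z (act X y) := by
      rw [hSkew Y (bracket X Z), hY, hi1Neg, hdf, neg_neg, hbr]
    have e6 : i1 X (i2 (bracket Y Z) ω) = act Y (act Z x) - act Z (act Y x) := by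
      rw [hSkew X (bracket Y Z), hX, hi1Neg, hdf, neg_neg, hbr]
    rw [e1, e2, e3, e4, e5, e6] at h0
    rw [h0]; abel
  have A1 := key Xh Xf Xf h f f hXh1 hXf1 hXf1 hXh2
  have A2 := key Xk Xf Xf k f f hXk1 hXf1 hXf1 hXk2
  have B1 := key Xf Xf Xh f f h hXf1 hXf1 hXh1 hXf2
  have B2 := key Xk Xf Xh k f h hXk1 hXf1 hXh1 hXk2
  have C1 := key Xf Xf Xk f f k hXf1 hXf1 hXk1 hXf2
  have C2 := key Xh Xf Xk h f k hXh1 hXf1 hXk1 hXh2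
  have hA := A1.symm.trans A2
  have hB := B1.symm.trans B2
  have hC := C1.symm.trans C2
  rw [hXf1, hXh1, hXk1, hi1Neg, hi1Neg, hi1Neg, hdf, hdf, hdf, hbr, hbr, hbr]
  have hfin : -(act Xh (act Xk f) - act Xk (act Xh f)) +
      -(act Xk (act Xf h) - act Xf (act Xk h)) +
      -(act Xf (act Xh k) - act Xh (act Xf k)) =
      ((act Xh (act Xf f) - act Xf (act Xf h) + act Xf (act Xf h)) -
        (act Xk (act Xf f) - act Xf (act Xf k) + act Xf (act Xf k))) +
      ((act Xk (act Xh f) - act Xf (act Xh k) + act Xh (act Xf k)) -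
        (act Xf (act Xh f) - act Xf (act Xh f) + act Xh (act Xf f))) +
      ((act Xf (act Xk f) - act Xf (act Xk f) + act Xk (act Xf f)) -
        (act Xh (act Xk f) - act Xf (act Xk h) + act Xk (act Xf h))) := by abel
  rw [hfin, hA, hB, hC]
  abel
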